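/- Every compactly generated metrizable topological gyrogroup has a suitable set. -/

import Mathlib

universe u

class Gyrogroup (G : Type u) where
  add : G → G → G
  zero : G
  neg : G → G
  gyr : G → G → G → G
  zero_add : ∀ x, add zero x = x
  add_zero : ∀ x, add x zero = x
  neg_add : ∀ x, add (neg x) x = zero
  add_neg : ∀ x, add x (neg x) = zero
  gyr_bij : ∀ x y, Function.Bijective (gyr x y)
  gyr_add : ∀ x y a b, gyr x y (add a b) = add (gyr x y a) (gyr x y b)
  left_assoc : ∀ x y z, add x (add y z) = add (add x y) (gyr x y z)
  loop : ∀ x y, gyr (add x y) y = gyr x y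

namespace Gyrogroup

variable {G : Type u}

instance [Gyrogroup G] : Add G := ⟨Gyrogroup.add⟩
instance [Gyrogroup G] : Zero G := ⟨Gyrogroup.zero⟩
instance [Gyrogroup G] : Neg G := ⟨Gyrogroup.neg⟩

/-- The gyrogroup cooperation `x ⊞ y = x ⊕ gyr[x, ⊖y](y)`. -/
def coadd [Gyrogroup G] (x y : G) : G := x + gyr x (-y) y

/-- `S` is a subgyrogroup: contains the identity and is closed under `⊕`, `⊖` and the
gyroautomorphisms. -/
def IsSubgyro [Gyrogroup G] (S : Set G) : Prop :=
  (0 : G) ∈ S ∧ (∀ ⦃a b : G⦄, a ∈ S → b ∈ S → a + b ∈ S) ∧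
    (∀ ⦃a : G⦄, a ∈ S → -a ∈ S) ∧
    ∀ ⦃a b c : G⦄, a ∈ S → b ∈ S → c ∈ S → gyr a b c ∈ S

/-- The subgyrogroup generated by `A`. -/
def gen [Gyrogroup G] (A : Set G) : Set G := ⋂₀ {S : Set G | IsSubgyro S ∧ A ⊆ S}

/-- `N` is a normal subgyrogroup: the kernel of a gyrogroup homomorphism. -/
def IsNormalSubgyro [Gyrogroup G] (N : Set G) : Prop :=
  ∃ (H : Type u) (i : Gyrogroup H) (f : G → H),
    (∀ a b : G, f (a + b) = i.add (f a) (f b)) ∧ N = f ⁻¹' {i.zero}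

/-- A (Hausdorff) topological gyrogroup. -/
class TopGyrogroup (G : Type u) [Gyrogroup G] [TopologicalSpace G] : Prop where
  t2 : T2Space G
  continuous_add : Continuous fun p : G × G => p.1 + p.2
  continuous_neg : Continuous fun x : G => -x

/-- `μ` is a neighborhood base at `0` consisting of gyr-invariant sets. -/
def IsGyroNhdBase [Gyrogroup G] [TopologicalSpace G] (μ : Set (Set G)) : Prop :=
  (∀ U ∈ μ, U ∈ nhds (0 : G)) ∧ (∀ W ∈ nhds (0 : G), ∃ U ∈ μ, U ⊆ W) ∧
    ∀ U ∈ μ, ∀ x y : G, gyr x y '' U = U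

/-- A strongly topological gyrogroup: some neighborhood base at `0` is gyr-invariant. -/
def StronglyTop (G : Type u) [Gyrogroup G] [TopologicalSpace G] : Prop :=
  ∃ μ : Set (Set G), IsGyroNhdBase μ

/-- `S` is a suitable set for `G`. -/
def IsSuitable [Gyrogroup G] [TopologicalSpace G] (S : Set G) : Prop :=
  DiscreteTopology S ∧ IsClosed (S ∪ {(0 : G)}) ∧ Dense (gen S)

end Gyrogroup

open Gyrogroup

section Algebra

variable {G : Type u} [Gyrogroup G]

lemma g_zero_add (x : G) : 0 + x = x := Gyrogroup.zero_add x
lemma g_add_zero (x : G) : x + 0 = x := Gyrogroup.add_zero x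
lemma g_neg_add (x : G) : -x + x = 0 := Gyrogroup.neg_add x
lemma g_add_neg (x : G) : x + -x = 0 := Gyrogroup.add_neg x
lemma g_left_assoc (x y z : G) : x + (y + z) = (x + y) + gyr x y z :=
  Gyrogroup.left_assoc x y z
lemma g_loop (x y : G) : gyr (x + y) y = gyr x y := Gyrogroup.loop x y

lemma neg_add_gyr (a x : G) : -a + (a + x) = gyr (-a) a x := by
  rw [g_left_assoc, g_neg_add, g_zero_add]

lemma addLeft_injective (a : G) : Function.Injective (fun x : G => a + x) := by
  intro x y h
  dsimp at h
  have h2 : gyr (-a) a x = gyr (-a) a y := by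
    rw [← neg_add_gyr, ← neg_add_gyr, h]
  exact (Gyrogroup.gyr_bij (-a) a).1 h2

lemma gyr_zero_left (a z : G) : gyr (0 : G) a z = z := by
  have h := g_left_assoc (0 : G) a z
  rw [g_zero_add, g_zero_add] at h
  exact (addLeft_injective a h).symm

lemma gyr_neg_left (a z : G) : gyr (-a) a z = z := by
  have h := g_loop (-a) a
  rw [g_neg_add] at h
  rw [← h]
  exact gyr_zero_left a z

lemma g_neg_add_cancel_left (a x : G) : -a + (a + x) = x := by
  rw [neg_add_gyr, gyr_neg_left]

lemma gyr_pos_neg (a z : G) : gyr a (-a) z = z := by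
  have h := g_loop a (-a)
  rw [g_add_neg] at h
  rw [← h]
  exact gyr_zero_left (-a) z

lemma g_add_neg_cancel_left (a x : G) : a + (-a + x) = x := by
  rw [g_left_assoc, g_add_neg, g_zero_add, gyr_pos_neg]

lemma g_neg_zero : -(0 : G) = 0 := by
  have h := g_neg_add (0 : G)
  rwa [g_add_zero] at h

lemma gyr_formula (a b c : G) : gyr a b c = -(a + b) + (a + (b + c)) := by
  rw [g_left_assoc a b c, g_neg_add_cancel_left]

/- gen lemmas -/

lemma zero_mem_gen (A : Set G) : (0 : G) ∈ gen A :=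
  Set.mem_sInter.2 fun _ hT => hT.1.1

lemma subset_gen (A : Set G) : A ⊆ gen A :=
  fun _ hx => Set.mem_sInter.2 fun _ hT => hT.2 hx

lemma gen_subset {A T : Set G} (hT : IsSubgyro T) (hA : A ⊆ T) : gen A ⊆ T :=
  fun _ hx => Set.mem_sInter.1 hx T ⟨hT, hA⟩

lemma isSubgyro_gen (A : Set G) : IsSubgyro (gen A) := by
  refine ⟨zero_mem_gen A, ?_, ?_, ?_⟩
  · intro a b ha hb
    exact Set.mem_sInter.2 fun T hT => hT.1.2.1 (Set.mem_sInter.1 ha T hT) (Set.mem_sInter.1 hb T hT)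
  · intro a ha
    exact Set.mem_sInter.2 fun T hT => hT.1.2.2.1 (Set.mem_sInter.1 ha T hT)
  · intro a b c ha hb hc
    exact Set.mem_sInter.2 fun T hT => hT.1.2.2.2 (Set.mem_sInter.1 ha T hT)
      (Set.mem_sInter.1 hb T hT) (Set.mem_sInter.1 hc T hT)

/- words -/

def wrd : List G → G → G
  | [], u => u
  | s :: l, u => s + wrd l u

lemma wrd_append (l : List G) (a u : G) : wrd (l ++ [a]) u = wrd l (a + u) := by
  induction l with
  | nil => rfl
  | cons s l ih => simp [wrd, ih]

lemma wrd_zero_mem_gen {S : Set G} : ∀ {l : List G}, (∀ a ∈ l, a ∈ S) → wrd l 0 ∈ gen S := by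
  intro l
  induction l with
  | nil => intro _; exact zero_mem_gen S
  | cons s l ih =>
    intro hl
    exact (isSubgyro_gen S).2.1 (subset_gen S (hl s List.mem_cons_self))
      (ih fun a ha => hl a (List.mem_cons_of_mem s ha))

end Algebra

section Clo

variable {G : Type u} [Gyrogroup G] [TopologicalSpace G]

lemma isSubgyro_closure_gen (hadd : Continuous fun p : G × G => p.1 + p.2)
    (hneg : Continuous fun x : G => -x) (S : Set G) : IsSubgyro (closure (gen S)) := by
  have hsub := isSubgyro_gen S
  have hadd' : ∀ a b : G, a ∈ closure (gen S) → b ∈ closure (gen S) →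
      a + b ∈ closure (gen S) := fun a b ha hb =>
    map_mem_closure₂ hadd ha hb fun x hx y hy => hsub.2.1 hx hy
  have hneg' : ∀ a : G, a ∈ closure (gen S) → -a ∈ closure (gen S) := fun a ha =>
    map_mem_closure hneg ha fun x hx => hsub.2.2.1 hx
  refine ⟨subset_closure (zero_mem_gen S), hadd', hneg', ?_⟩
  intro a b c ha hb hc
  rw [gyr_formula]
  exact hadd' _ _ (hneg' _ (hadd' _ _ ha hb)) (hadd' _ _ ha (hadd' _ _ hb hc))

end Clo

section Seq

/-- Dependent-choice style recursion producing a sequence with step relations. -/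
lemma exists_nat_seq {α : Type*} (P : ℕ → α → Prop) (R : ℕ → α → α → Prop) (a0 : α)
    (h0 : P 0 a0) (hstep : ∀ n a, P n a → ∃ b, P (n + 1) b ∧ R n a b) :
    ∃ f : ℕ → α, f 0 = a0 ∧ (∀ n, P n (f n)) ∧ ∀ n, R n (f n) (f (n + 1)) := by
  classical
  let g : ∀ n : ℕ, {a : α // P n a} := fun n =>
    Nat.rec ⟨a0, h0⟩ (fun n p => ⟨(hstep n p.1 p.2).choose, (hstep n p.1 p.2).choose_spec.1⟩) n
  exact ⟨fun n => (g n).1, rfl, fun n => (g n).2,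
    fun n => (hstep n (g n).1 (g n).2).choose_spec.2⟩

end Seq

section Metricpart

open Metric

variable {G : Type u} [Gyrogroup G] [MetricSpace G]

lemma gyro_uc (hadd : Continuous fun p : G × G => p.1 + p.2)
    {A V : Set G} (hA : IsCompact A) (hV : IsCompact V) {ε : ℝ} (hε : 0 < ε) :
    ∃ θ > 0, ∀ s ∈ A, ∀ y' ∈ V, ∀ y : G, dist y y' < θ → dist (s + y) (s + y') < ε := by
  classical
  have hcont : ∀ p : G × G, ∃ ρ > 0, ∀ s y : G, dist s p.1 < ρ → dist y p.2 < ρ →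
      dist (s + y) (p.1 + p.2) < ε / 2 := by
    intro p
    have h := Metric.continuousAt_iff.1 (hadd.continuousAt (x := p)) (ε / 2) (half_pos hε)
    obtain ⟨δ, hδ, h⟩ := h
    refine ⟨δ, hδ, fun s y hs hy => ?_⟩
    have : dist ((s, y) : G × G) p < δ := by
      rw [Prod.dist_eq]; exact max_lt hs hy
    exact h this
  choose ρ hρ hρ' using hcont
  obtain ⟨t, htP, hcov⟩ := (hA.prod hV).elim_nhds_subcover
      (fun p => ball p.1 (ρ p / 2) ×ˢ ball p.2 (ρ p / 2))
      (fun p _ => prod_mem_nhds (ball_mem_nhds _ (half_pos (hρ p)))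
        (ball_mem_nhds _ (half_pos (hρ p))))
  rcases t.eq_empty_or_nonempty with rfl | hte
  · refine ⟨1, one_pos, fun s hs y' hy' y _ => ?_⟩
    exact absurd (hcov (Set.mk_mem_prod hs hy')) (by simp)
  · refine ⟨t.inf' hte fun p => ρ p / 2, ?_, ?_⟩
    · exact (Finset.lt_inf'_iff hte).2 fun p _ => half_pos (hρ p)
    · intro s hs y' hy' y hyy'
      obtain ⟨p, hpt, hmem⟩ := Set.mem_iUnion₂.1 (hcov (Set.mk_mem_prod hs hy'))
      have hθp : t.inf' hte (fun p => ρ p / 2) ≤ ρ p / 2 := Finset.inf'_le _ hpt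
      obtain ⟨hs1, hy1⟩ := Set.mem_prod.1 hmem
      rw [mem_ball] at hs1 hy1
      have hsp : dist s p.1 < ρ p := lt_of_lt_of_le hs1 (half_le_self (hρ p).le)
      have hy'p : dist y' p.2 < ρ p := lt_of_lt_of_le hy1 (half_le_self (hρ p).le)
      have hyp : dist y p.2 < ρ p := by
        calc dist y p.2 ≤ dist y y' + dist y' p.2 := dist_triangle _ _ _
          _ < ρ p / 2 + ρ p / 2 := by
              exact add_lt_add (lt_of_lt_of_le hyy' hθp) hy1
          _ = ρ p := by ring
      have h1 := hρ' p s y hsp hyp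
      have h2 := hρ' p s y' hsp hy'p
      calc dist (s + y) (s + y') ≤ dist (s + y) (p.1 + p.2) + dist (p.1 + p.2) (s + y') :=
            dist_triangle _ _ _
        _ < ε / 2 + ε / 2 := add_lt_add h1 (by rwa [dist_comm])
        _ = ε := by ring

def Vset (A : Set G) : ℕ → Set G
  | 0 => {0}
  | n + 1 => (fun p : G × G => p.1 + p.2) '' (A ×ˢ Vset A n)

lemma isCompact_Vset (hadd : Continuous fun p : G × G => p.1 + p.2)
    {A : Set G} (hA : IsCompact A) : ∀ n, IsCompact (Vset A n)
  | 0 => isCompact_singleton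
  | n + 1 => (hA.prod (isCompact_Vset hadd hA n)).image hadd

lemma wrd_zero_mem_Vset {A : Set G} :
    ∀ {l : List G}, (∀ a ∈ l, a ∈ A) → wrd l 0 ∈ Vset A l.length := by
  intro l
  induction l with
  | nil => intro _; exact rfl
  | cons s l ih =>
    intro hl
    exact ⟨(s, wrd l 0), Set.mem_prod.2 ⟨hl s List.mem_cons_self,
      ih fun a ha => hl a (List.mem_cons_of_mem s ha)⟩, rfl⟩

lemma gyro_tube (hadd : Continuous fun p : G × G => p.1 + p.2)
    {A : Set G} (hA : IsCompact A) :
    ∀ (n : ℕ) (ε : ℝ), 0 < ε → ∃ δ > 0, ∀ l : List G, l.length = n →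
      (∀ a ∈ l, a ∈ A) → ∀ u : G, dist u 0 < δ → dist (wrd l u) (wrd l 0) < ε := by
  intro n
  induction n with
  | zero =>
    intro ε hε
    refine ⟨ε, hε, fun l hl _ u hu => ?_⟩
    rw [List.length_eq_zero_iff] at hl
    subst hl
    exact hu
  | succ n ih =>
    intro ε hε
    obtain ⟨θ, hθ, hUC⟩ := gyro_uc hadd hA (isCompact_Vset hadd hA n) hε
    obtain ⟨δ, hδ, hIH⟩ := ih θ hθ
    refine ⟨δ, hδ, fun l hl hmem u hu => ?_⟩
    match l, hl with
    | a :: l', hl =>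
      have hlen : l'.length = n := by simpa using hl
      have h1 : dist (wrd l' u) (wrd l' 0) < θ :=
        hIH l' hlen (fun x hx => hmem x (List.mem_cons_of_mem a hx)) u hu
      have h2 : wrd l' 0 ∈ Vset A n := by
        have := wrd_zero_mem_Vset (A := A) (l := l')
          (fun x hx => hmem x (List.mem_cons_of_mem a hx))
        rwa [hlen] at this
      exact hUC a (hmem a List.mem_cons_self) (wrd l' 0) h2 (wrd l' u) h1

lemma gyro_stage (hadd : Continuous fun p : G × G => p.1 + p.2)
    (hneg : Continuous fun x : G => -x)
    (Qb : Set G) (qmem : ∀ ρ : ℝ, 0 < ρ → ∃ q ∈ Qb, q ≠ 0 ∧ dist q 0 < ρ)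
    {C : Set G} (hC : IsCompact C) {ε : ℝ} (hε : 0 < ε) :
    ∃ F C' : Set G, F.Finite ∧ F ⊆ (C ∪ (Qb ∩ ball 0 ε)) \ {0} ∧ IsCompact C' ∧
      C' ⊆ ball 0 ε ∧ ∀ x ∈ C, ∃ s ∈ F, -s + x ∈ C' := by
  classical
  have hψ : Continuous fun p : G × G => -p.1 + p.2 :=
    hadd.comp ((hneg.comp continuous_fst).prodMk continuous_snd)
  have h00 := Metric.continuousAt_iff.1 (hψ.continuousAt (x := ((0 : G), (0 : G)))) ε hε
  obtain ⟨ρ, hρ, hρ'⟩ := h00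
  obtain ⟨q, hqQ, hq0, hqρ⟩ := qmem (min ρ ε) (lt_min hρ hε)
  set pt : G → G := fun c => if c = 0 then q else c with hpt
  have hval : (-(0 : G) + 0 : G) = 0 := by rw [g_neg_zero, g_zero_add]
  have hηex : ∀ c : G, ∃ η > 0, ∀ x, dist x c < η → dist (-(pt c) + x) 0 < ε := by
    intro c
    by_cases hc : c = 0
    · subst hc
      refine ⟨ρ, hρ, fun x hx => ?_⟩
      have hd : dist ((q, x) : G × G) ((0 : G), (0 : G)) < ρ := by
        rw [Prod.dist_eq]
        exact max_lt (lt_of_lt_of_le hqρ (min_le_left _ _)) hx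
      have := hρ' hd
      dsimp only at this
      rw [hval] at this
      simpa [hpt] using this
    · have hc2 := Metric.continuousAt_iff.1
        ((hadd.comp ((continuous_const (y := -c)).prodMk continuous_id)).continuousAt (x := c)) ε hε
      obtain ⟨η, hη, hη'⟩ := hc2
      refine ⟨η, hη, fun x hx => ?_⟩
      have := hη' hx
      simp only [Function.comp, id_eq] at this
      rw [g_neg_add] at this
      simpa [hpt, hc] using this
  choose η hη hη' using hηex
  obtain ⟨t, htC, hcov⟩ := hC.elim_nhds_subcover (fun c => ball c (η c / 2))
    (fun c _ => ball_mem_nhds _ (half_pos (hη c)))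
  refine ⟨↑(t.image pt),
    ⋃ c ∈ (t : Set G), (fun x => -(pt c) + x) '' (C ∩ closedBall c (η c / 2)),
    (t.image pt).finite_toSet, ?_, ?_, ?_, ?_⟩
  · intro y hy
    obtain ⟨c, hct, rfl⟩ := Finset.mem_image.1 (Finset.mem_coe.1 hy)
    by_cases hc : c = 0
    · subst hc
      refine ⟨Or.inr ⟨by simpa [hpt] using hqQ, ?_⟩, by simpa [hpt] using hq0⟩
      simp only [hpt, if_pos rfl]
      exact mem_ball.2 (lt_of_lt_of_le hqρ (min_le_right _ _))
    · refine ⟨Or.inl ?_, by simpa [hpt, hc] using hc⟩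
      simpa [hpt, hc] using htC c hct
  · exact Set.Finite.isCompact_biUnion t.finite_toSet fun c _ =>
      (hC.inter_right isClosed_closedBall).image
        (hadd.comp ((continuous_const (y := -(pt c))).prodMk continuous_id))
  · intro y hy
    obtain ⟨c, hct, x, ⟨hxC, hxb⟩, rfl⟩ := Set.mem_iUnion₂.1 hy
    exact mem_ball.2 (hη' c x (lt_of_le_of_lt (mem_closedBall.1 hxb) (half_lt_self (hη c))))
  · intro x hxC
    obtain ⟨c, hct, hx⟩ := Set.mem_iUnion₂.1 (hcov hxC)
    refine ⟨pt c, Finset.mem_coe.2 (Finset.mem_image_of_mem pt hct), ?_⟩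
    exact Set.mem_iUnion₂.2 ⟨c, hct, Set.mem_image_of_mem _
      ⟨hxC, mem_closedBall.2 (le_of_lt (mem_ball.1 hx))⟩⟩

end Metricpart

section MainAux

open Metric

variable {G : Type u} [Gyrogroup G] [MetricSpace G]

lemma aux_main (hadd : Continuous fun p : G × G => p.1 + p.2)
    (hneg : Continuous fun x : G => -x)
    (h0 : ∀ ρ : ℝ, 0 < ρ → ∃ q : G, q ≠ 0 ∧ dist q 0 < ρ)
    {K : Set G} (hK : IsCompact K) :
    ∃ S : Set G, (0 : G) ∉ S ∧ (∀ z : G, z ≠ 0 → ∃ r > 0, (S ∩ ball z r).Finite) ∧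
      K ⊆ closure (gen S) := by
  classical
  -- a null sequence of nonzero points
  have hq : ∀ n : ℕ, ∃ q : G, q ≠ 0 ∧ dist q 0 < 1 / (n + 1) := fun n =>
    h0 _ (by positivity)
  choose qs hqs0 hqsd using hq
  have hqtend : Filter.Tendsto qs Filter.atTop (nhds 0) := by
    rw [Metric.tendsto_atTop]
    intro ε hε
    obtain ⟨N, hN⟩ := exists_nat_one_div_lt hε
    refine ⟨N, fun n hn => lt_of_lt_of_le (lt_of_lt_of_le (hqsd n) ?_) hN.le⟩
    apply one_div_le_one_div_of_le (by positivity)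
    exact_mod_cast Nat.succ_le_succ hn
  set Qb : Set G := insert 0 (Set.range qs) with hQbdef
  have hQb : IsCompact Qb := hqtend.isCompact_insert_range
  have qmem : ∀ ρ : ℝ, 0 < ρ → ∃ q ∈ Qb, q ≠ 0 ∧ dist q 0 < ρ := by
    intro ρ hρ
    obtain ⟨n, hn⟩ := exists_nat_one_div_lt hρ
    exact ⟨qs n, Or.inr ⟨n, rfl⟩, hqs0 n, lt_trans (hqsd n) hn⟩
  set b : ℕ → ℝ := fun m => (1 / 2 : ℝ) ^ m with hbdef
  have hb : ∀ m, 0 < b m := fun m => by positivity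
  have hbmono : ∀ m n, m ≤ n → b n ≤ b m := fun m n h =>
    pow_le_pow_of_le_one (by norm_num) (by norm_num) h
  -- the recursive construction
  set P : ℕ → Set G × Set G → Prop := fun n p =>
    IsCompact p.1 ∧ IsCompact p.2 ∧ Qb ⊆ p.2 ∧ p.1 ⊆ p.2 ∧ (1 ≤ n → p.1 ⊆ ball 0 (b n))
    with hPdef
  set R : ℕ → Set G × Set G → Set G × Set G → Prop := fun n p p' =>
    p'.2 = p.2 ∪ p'.1 ∧ ∃ F : Set G, F.Finite ∧
      F ⊆ (p.1 ∪ (Qb ∩ ball 0 (b (n + 1)))) \ {0} ∧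
      (∀ u ∈ p'.1, ∀ l : List G, l.length = n + 1 → (∀ a ∈ l, a ∈ p.2) →
        dist (wrd l u) (wrd l 0) < b (n + 1)) ∧
      (∀ x ∈ p.1, ∃ s ∈ F, -s + x ∈ p'.1) with hRdef
  have hstep : ∀ n p, P n p → ∃ p', P (n + 1) p' ∧ R n p p' := by
    intro n p hp
    obtain ⟨δ, hδ, htube⟩ := gyro_tube hadd hp.2.1 (n + 1) (b (n + 1)) (hb _)
    have hε : 0 < min δ (b (n + 1)) := lt_min hδ (hb _)
    obtain ⟨F, C', hF, hFsub, hC', hC'sub, hcov⟩ := gyro_stage hadd hneg Qb qmem hp.1 hε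
    refine ⟨(C', p.2 ∪ C'), ⟨hC', hp.2.1.union hC',
      hp.2.2.1.trans Set.subset_union_left, Set.subset_union_right,
      fun _ => hC'sub.trans (ball_subset_ball (min_le_right _ _))⟩,
      rfl, F, hF, ?_, ?_, hcov⟩
    · intro y hy
      refine ⟨(hFsub hy).1.imp id fun h => ⟨h.1, ball_subset_ball (min_le_right _ _) h.2⟩,
        (hFsub hy).2⟩
    · intro u hu l hl hlmem
      refine htube l hl hlmem u ?_
      exact lt_of_lt_of_le (mem_ball.1 (hC'sub hu)) (min_le_left _ _)
  obtain ⟨f, hf0, hfP, hfR⟩ := exists_nat_seq P R (K, K ∪ Qb)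
    ⟨hK, hK.union hQb, Set.subset_union_right, Set.subset_union_left,
      fun h => absurd h (by omega)⟩ hstep
  have hRall := fun n => hfR n
  choose FF hFFfin hFFsub hword hcov using fun n => (hfR n).2
  have hAeq : ∀ n, (f (n + 1)).2 = (f n).2 ∪ (f (n + 1)).1 := fun n => (hfR n).1
  have hAmono : ∀ i j, i ≤ j → (f i).2 ⊆ (f j).2 := by
    intro i j hij
    induction j with
    | zero => rw [Nat.le_zero.1 hij]
    | succ j ih =>
      by_cases h : i ≤ j
      · exact (ih h).trans (by rw [hAeq j]; exact Set.subset_union_left)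
      · have hh : i = j + 1 := by omega
        rw [hh]
  set S : Set G := ⋃ n, FF n with hSdef
  have hFFS : ∀ n, FF n ⊆ S := fun n => Set.subset_iUnion FF n
  have hS0 : (0 : G) ∉ S := by
    intro h
    obtain ⟨n, hn⟩ := Set.mem_iUnion.1 h
    exact (hFFsub n hn).2 rfl
  have hFsmall : ∀ m, 1 ≤ m → FF m ⊆ ball 0 (b m) := by
    intro m hm y hy
    rcases (hFFsub m hy).1 with h | h
    · exact (hfP m).2.2.2.2 hm h
    · exact ball_subset_ball (hbmono m (m + 1) (Nat.le_succ m)) h.2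
  refine ⟨S, hS0, ?_, ?_⟩
  · -- local finiteness away from 0
    intro z hz
    have hdz : 0 < dist z 0 := dist_pos.2 hz
    obtain ⟨M, hM⟩ := exists_pow_lt_of_lt_one (half_pos hdz) (by norm_num : (1 / 2 : ℝ) < 1)
    refine ⟨dist z 0 / 2, half_pos hdz, ?_⟩
    have hsub : S ∩ ball z (dist z 0 / 2) ⊆ ⋃ m ∈ Finset.range (M + 1), FF m := by
      rintro y ⟨hyS, hyb⟩
      obtain ⟨m, hym⟩ := Set.mem_iUnion.1 hyS
      by_cases hm : m ≤ M
      · exact Set.mem_biUnion (Finset.mem_range.2 (Nat.lt_succ_of_le hm)) hym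
      · exfalso
        push_neg at hm
        have hm1 : 1 ≤ m := by omega
        have hy0 : dist y 0 < dist z 0 / 2 := by
          have := mem_ball.1 (hFsmall m hm1 hym)
          calc dist y 0 < b m := this
            _ ≤ b M := hbmono M m (by omega)
            _ < dist z 0 / 2 := hM
        have htri : dist z 0 ≤ dist z y + dist y 0 := dist_triangle _ _ _
        rw [mem_ball, dist_comm] at hyb
        linarith
    exact (Set.Finite.biUnion (Finset.range (M + 1)).finite_toSet
      fun m _ => hFFfin m).subset hsub
  · -- density on K
    intro x hx
    rw [Metric.mem_closure_iff]
    intro ε hε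
    obtain ⟨M0, hM0⟩ := exists_pow_lt_of_lt_one hε (by norm_num : (1 / 2 : ℝ) < 1)
    have hbM : b (M0 + 1) < ε :=
      lt_of_le_of_lt (hbmono M0 (M0 + 1) (Nat.le_succ _)) hM0
    have hstep' : ∀ n (v : G), v ∈ (f n).1 →
        ∃ w, w ∈ (f (n + 1)).1 ∧ ∃ s ∈ FF n, w = -s + v := by
      intro n v hv
      obtain ⟨s, hsF, hsw⟩ := hcov n v hv
      exact ⟨-s + v, hsw, s, hsF, rfl⟩
    have hx0 : x ∈ (f 0).1 := by rw [hf0]; exact hx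
    obtain ⟨u, hu0, huP, huR⟩ := exists_nat_seq (fun n v => v ∈ (f n).1)
      (fun n v w => ∃ s ∈ FF n, w = -s + v) x hx0 hstep'
    choose sfun hsF hsu using huR
    set lst : ℕ → List G := fun m => (List.range m).map sfun with hlst
    have hlen : ∀ m, (lst m).length = m := by intro m; simp [hlst]
    have hwx : ∀ m, wrd (lst m) (u m) = x := by
      intro m
      induction m with
      | zero => simpa [hlst, wrd] using hu0
      | succ m ih =>
        have hsplit : lst (m + 1) = lst m ++ [sfun m] := by
          simp [hlst, List.range_succ]
        rw [hsplit, wrd_append, hsu m, g_add_neg_cancel_left]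
        exact ih
    have hlmem : ∀ a ∈ lst (M0 + 1), a ∈ (f M0).2 := by
      intro a ha
      obtain ⟨i, hi, rfl⟩ := List.mem_map.1 ha
      rw [List.mem_range] at hi
      have h1 : sfun i ∈ FF i := hsF i
      have h2 : FF i ⊆ (f i).2 := by
        intro y hy
        rcases (hFFsub i hy).1 with h | h
        · exact (hfP i).2.2.2.1 h
        · exact (hfP i).2.2.1 h.1
      exact hAmono i M0 (by omega) (h2 h1)
    have hdist := hword M0 (u (M0 + 1)) (huP (M0 + 1)) (lst (M0 + 1)) (hlen _) hlmem
    refine ⟨wrd (lst (M0 + 1)) 0, wrd_zero_mem_gen fun a ha => ?_, ?_⟩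
    · obtain ⟨i, hi, rfl⟩ := List.mem_map.1 ha
      exact hFFS i (hsF i)
    · calc dist x (wrd (lst (M0 + 1)) 0)
          = dist (wrd (lst (M0 + 1)) (u (M0 + 1))) (wrd (lst (M0 + 1)) 0) := by
            rw [hwx (M0 + 1)]
        _ < b (M0 + 1) := hdist
        _ < ε := hbM

end MainAux

theorem compactlyGenerated_metrizable_suitable {G : Type u} [Gyrogroup G]
    [TopologicalSpace G] [TopGyrogroup G] [TopologicalSpace.MetrizableSpace G]
    (hcg : ∃ K : Set G, IsCompact K ∧ gen K = Set.univ) :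
    ∃ S : Set G, IsSuitable S := by
  classical
  haveI : T2Space G := TopGyrogroup.t2
  have hadd : Continuous fun p : G × G => p.1 + p.2 := TopGyrogroup.continuous_add
  have hneg : Continuous fun x : G => -x := TopGyrogroup.continuous_neg
  obtain ⟨K, hK, hgenK⟩ := hcg
  letI : MetricSpace G := TopologicalSpace.metrizableSpaceMetric G
  by_cases h0 : ∀ ρ : ℝ, 0 < ρ → ∃ q : G, q ≠ 0 ∧ dist q 0 < ρ
  · -- 0 is not isolated
    obtain ⟨S, hS0, hloc, hKcl⟩ := aux_main hadd hneg h0 hK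
    refine ⟨S, ?_, ?_, ?_⟩
    · -- discrete
      rw [discreteTopology_iff_isOpen_singleton]
      rintro ⟨s, hsS⟩
      have hs0 : s ≠ 0 := fun h => hS0 (h ▸ hsS)
      obtain ⟨r, hr, hfin⟩ := hloc s hs0
      have hTfin : ((S ∩ Metric.ball s r) \ {s}).Finite := hfin.subset Set.diff_subset
      have hUopen : IsOpen (Metric.ball s r \ ((S ∩ Metric.ball s r) \ {s})) :=
        Metric.isOpen_ball.sdiff hTfin.isClosed
      have hkey : ({⟨s, hsS⟩} : Set S) =
          Subtype.val ⁻¹' (Metric.ball s r \ ((S ∩ Metric.ball s r) \ {s})) := by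
        ext ⟨y, hyS⟩
        simp only [Set.mem_singleton_iff, Set.mem_preimage, Set.mem_diff,
          Set.mem_inter_iff, Set.mem_singleton_iff, Subtype.mk.injEq]
        constructor
        · rintro rfl
          exact ⟨Metric.mem_ball_self hr, fun h => h.2 rfl⟩
        · rintro ⟨hyb, hy2⟩
          by_contra hne
          exact hy2 ⟨⟨hyS, hyb⟩, hne⟩
      rw [hkey]
      exact continuous_subtype_val.isOpen_preimage _ hUopen
    · -- closed
      rw [← isOpen_compl_iff]
      rw [isOpen_iff_forall_mem_open]
      intro z hz
      simp only [Set.mem_compl_iff, Set.mem_union, Set.mem_singleton_iff, not_or] at hz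
      obtain ⟨hzS, hz0⟩ := hz
      obtain ⟨r, hr, hfin⟩ := hloc z hz0
      refine ⟨Metric.ball z r \ ((S ∩ Metric.ball z r) ∪ {0}), ?_, ?_, ?_⟩
      · intro y hy
        simp only [Set.mem_compl_iff, Set.mem_union, Set.mem_singleton_iff, not_or]
        constructor
        · intro hyS
          exact hy.2 (Or.inl ⟨hyS, hy.1⟩)
        · intro hy0
          exact hy.2 (Or.inr hy0)
      · exact Metric.isOpen_ball.sdiff ((hfin.union (Set.finite_singleton 0)).isClosed)
      · exact ⟨Metric.mem_ball_self hr, fun h => h.elim (fun h' => hzS h'.1)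
          (fun h' => hz0 h')⟩
    · -- dense
      have hsub : IsSubgyro (closure (gen S)) := isSubgyro_closure_gen hadd hneg S
      have huniv : Set.univ ⊆ closure (gen S) := by
        rw [← hgenK]
        exact gen_subset hsub hKcl
      rw [dense_iff_closure_eq]
      exact Set.eq_univ_of_univ_subset huniv
  · -- 0 is isolated: G is discrete
    push_neg at h0
    obtain ⟨ρ, hρ, hq⟩ := h0
    have hball : Metric.ball (0 : G) ρ = {0} := by
      apply subset_antisymm
      · intro y hy
        by_contra hy0
        exact absurd (Metric.mem_ball.1 hy) (not_lt.2 (hq y hy0))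
      · intro y hy
        rw [Set.mem_singleton_iff] at hy
        subst hy
        exact Metric.mem_ball_self hρ
    have h0open : IsOpen ({0} : Set G) := hball ▸ Metric.isOpen_ball
    have hsing : ∀ a : G, IsOpen ({a} : Set G) := by
      intro a
      have hhomeo : IsOpenMap (fun x : G => a + x) :=
        Homeomorph.isOpenMap
          { toFun := fun x => a + x
            invFun := fun x => -a + x
            left_inv := fun x => g_neg_add_cancel_left a x
            right_inv := fun x => g_add_neg_cancel_left a x
            continuous_toFun := hadd.comp (continuous_const.prodMk continuous_id)
            continuous_invFun := hadd.comp (continuous_const.prodMk continuous_id) }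
      have himg := hhomeo {0} h0open
      have : (fun x : G => a + x) '' {0} = {a} := by
        rw [Set.image_singleton, g_add_zero]
      rwa [this] at himg
    haveI : DiscreteTopology G := discreteTopology_iff_isOpen_singleton.2 hsing
    refine ⟨Set.univ \ {0}, ?_, ?_, ?_⟩
    · infer_instance
    · have : (Set.univ \ {(0 : G)}) ∪ {0} = Set.univ := by
        ext x
        by_cases hx : x = 0 <;> simp [hx]
      rw [this]
      exact isClosed_univ
    · have : gen (Set.univ \ {(0 : G)}) = Set.univ := by
        apply Set.eq_univ_of_forall
        intro x
        by_cases hx : x = 0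
        · subst hx
          exact zero_mem_gen _
        · exact subset_gen _ ⟨trivial, hx⟩
      rw [this]
      exact dense_univ
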